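/- For every positive semidefinite matrix A ∈ ℝ^{d×d} and every integer k ≥ 1, there exists a matrix B ∈ ℝ^{d×d} with rank(B) ≤ k such that ‖A − B‖_F ≤ tr(A)/(2√k). -/

import Mathlib

open MeasureTheory Matrix

/-- The Frobenius norm of a real matrix. -/
noncomputable def frobNorm {m n : ℕ} (M : Matrix (Fin m) (Fin n) ℝ) : ℝ :=
  Real.sqrt (∑ i, ∑ j, (M i j) ^ 2)

variable {d : ℕ}


lemma frob_sum_eq_trace (M : Matrix (Fin d) (Fin d) ℝ) :
    (Mᵀ * M).trace = ∑ i, ∑ j, (M i j)^2 := by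
  rw [Matrix.trace, Finset.sum_comm]
  simp [Matrix.mul_apply, Matrix.diag, sq]

lemma conj_trace (U : Matrix (Fin d) (Fin d) ℝ) (hU : star U * U = 1) (w : Fin d → ℝ) :
    (U * Matrix.diagonal w * star U).trace = ∑ i, w i := by
  rw [Matrix.trace_mul_cycle, hU, one_mul, Matrix.trace_diagonal]

lemma conj_herm (U : Matrix (Fin d) (Fin d) ℝ) (w : Fin d → ℝ) :
    (U * Matrix.diagonal w * star U)ᵀ = U * Matrix.diagonal w * star U := by
  rw [← Matrix.conjTranspose_eq_transpose_of_trivial, ← Matrix.star_eq_conjTranspose]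
  simp only [StarMul.star_mul, star_star, Matrix.star_eq_conjTranspose, Matrix.diagonal_conjTranspose]
  simp [Matrix.mul_assoc]

lemma conj_frob (U : Matrix (Fin d) (Fin d) ℝ) (hU : star U * U = 1) (w : Fin d → ℝ) :
    ∑ i, ∑ j, ((U * Matrix.diagonal w * star U) i j)^2 = ∑ i, (w i)^2 := by
  rw [← frob_sum_eq_trace, conj_herm U w]
  have h : (U * Matrix.diagonal w * star U) * (U * Matrix.diagonal w * star U)
      = U * Matrix.diagonal (fun i => (w i)^2) * star U := by
    have : Matrix.diagonal w * Matrix.diagonal w = Matrix.diagonal (fun i => (w i)^2) := by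
      rw [Matrix.diagonal_mul_diagonal]; ext i; ring
    calc (U * Matrix.diagonal w * star U) * (U * Matrix.diagonal w * star U)
        = U * Matrix.diagonal w * ((star U * U) * (Matrix.diagonal w * star U)) := by
          simp [Matrix.mul_assoc]
      _ = U * Matrix.diagonal (fun i => (w i)^2) * star U := by
          rw [hU, one_mul, ← Matrix.mul_assoc, Matrix.mul_assoc U, this]
  rw [h, conj_trace U hU]

lemma conj_rank (U : Matrix (Fin d) (Fin d) ℝ) (hU : U ∈ Matrix.unitaryGroup (Fin d) ℝ)
    (w : Fin d → ℝ) :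
    (U * Matrix.diagonal w * star U).rank = (Matrix.diagonal w).rank := by
  have h1 : IsUnit U.det := by
    apply Matrix.isUnit_det_of_right_inverse
    exact (Matrix.mem_unitaryGroup_iff).mp hU
  have h2 : IsUnit (star U).det := by
    apply Matrix.isUnit_det_of_right_inverse
    exact (Matrix.mem_unitaryGroup_iff').mp hU
  rw [Matrix.rank_mul_eq_left_of_isUnit_det _ _ h2,
    Matrix.rank_mul_eq_right_of_isUnit_det _ _ h1]


theorem stmt2 (d : ℕ) (A : Matrix (Fin d) (Fin d) ℝ) (hA : A.PosSemidef)
    (k : ℕ) (hk : 1 ≤ k) :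
    ∃ B : Matrix (Fin d) (Fin d) ℝ, B.rank ≤ k ∧
      frobNorm (A - B) ≤ A.trace / (2 * Real.sqrt k) := by
  classical
  have hsqrtk : 0 < Real.sqrt k := Real.sqrt_pos.mpr (by positivity)
  have htr : 0 ≤ A.trace := by
    rw [Matrix.trace]
    apply Finset.sum_nonneg
    intro i _
    exact hA.diag_nonneg
  rcases le_or_gt d k with hdk | hkd
  · refine ⟨A, ?_, ?_⟩
    · calc A.rank ≤ Fintype.card (Fin d) := Matrix.rank_le_card_width A
        _ = d := by simp
        _ ≤ k := hdk
    · simp only [sub_self, frobNorm]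
      have : (∑ i, ∑ j, ((0 : Matrix (Fin d) (Fin d) ℝ) i j) ^ 2) = 0 := by simp
      rw [this, Real.sqrt_zero]
      positivity
  · -- k < d
    have hH := hA.1
    set U : Matrix (Fin d) (Fin d) ℝ := (hH.eigenvectorUnitary : Matrix (Fin d) (Fin d) ℝ) with hUdef
    have hUmem : U ∈ Matrix.unitaryGroup (Fin d) ℝ := (hH.eigenvectorUnitary).2
    have hsU : star U * U = 1 := (Matrix.mem_unitaryGroup_iff').mp hUmem
    set lam := hH.eigenvalues with hlam
    have hspec : A = U * Matrix.diagonal lam * star U := by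
      have := hH.spectral_theorem
      simpa using this
    have hlam_nonneg : ∀ i, 0 ≤ lam i := fun i => hA.eigenvalues_nonneg i
    set σ := Tuple.sort lam with hσ
    have hmono : Monotone (lam ∘ σ) := Tuple.monotone_sort lam
    set S : Finset (Fin d) := Finset.univ.filter (fun i => d - k ≤ ((σ.symm i : Fin d) : ℕ)) with hS
    -- card of S
    have hcardS : S.card = k := by
      have e1 : S.card = (Finset.univ.filter (fun j : Fin d => d - k ≤ (j:ℕ))).card := by
        apply Finset.card_bij (fun i _ => σ.symm i)
        · intro a ha; simp [hS] at ha ⊢; exact ha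
        · intro a _ b _ h; exact σ.symm.injective h
        · intro b hb; refine ⟨σ b, ?_, by simp⟩; simp [hS] at hb ⊢; exact hb
      have hd : d - k < d := by omega
      have e2 : (Finset.univ.filter (fun j : Fin d => d - k ≤ (j:ℕ)))
          = Finset.Ici (⟨d - k, hd⟩ : Fin d) := by
        ext j; simp [Fin.le_def]
      rw [e1, e2, Fin.card_Ici, Fin.val_mk]
      omega
    -- ordering
    have horder : ∀ i ∉ S, ∀ j ∈ S, lam i ≤ lam j := by
      intro i hi j hj
      have h1 : ¬ (d - k ≤ ((σ.symm i : Fin d) : ℕ)) := by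
        simpa [hS] using hi
      have h2 : d - k ≤ ((σ.symm j : Fin d) : ℕ) := by
        simpa [hS] using hj
      have hle : σ.symm i ≤ σ.symm j := by
        rw [Fin.le_def]; omega
      have := hmono hle
      simpa using this
    set μ : Fin d → ℝ := fun i => if i ∈ S then lam i else 0 with hμ
    set ν : Fin d → ℝ := fun i => if i ∈ S then 0 else lam i with hν
    refine ⟨U * Matrix.diagonal μ * star U, ?_, ?_⟩
    · rw [conj_rank U hUmem, Matrix.rank_diagonal]
      have : ∀ i : {i // μ i ≠ 0}, (i : Fin d) ∈ S := by
        intro ⟨i, hi⟩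
        by_contra h
        simp [hμ, h] at hi
      calc Fintype.card {i // μ i ≠ 0}
          = (Finset.univ.filter (fun i => μ i ≠ 0)).card := Fintype.card_subtype _
        _ ≤ S.card := by
            apply Finset.card_le_card
            intro i hi
            rw [Finset.mem_filter] at hi
            by_contra h
            simp [hμ, h] at hi
        _ = k := hcardS
    · have hdiff : A - U * Matrix.diagonal μ * star U = U * Matrix.diagonal ν * star U := by
        have hdsub : Matrix.diagonal lam - Matrix.diagonal μ = Matrix.diagonal ν := by
          rw [Matrix.diagonal_sub]
          apply congrArg Matrix.diagonal
          funext i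
          by_cases h : i ∈ S <;> simp [hμ, hν, h]
        rw [hspec, ← sub_mul, ← Matrix.mul_sub, hdsub]
      rw [hdiff]
      unfold frobNorm
      rw [conj_frob U hsU]
      -- trace
      have htrA : A.trace = ∑ i, lam i := by
        rw [hspec, conj_trace U hsU]
      set s := ∑ j ∈ S, lam j with hs
      set t := ∑ i ∈ Sᶜ, lam i with ht
      have hst : A.trace = s + t := by
        rw [htrA, hs, ht, ← Finset.sum_add_sum_compl S]
      have hs0 : 0 ≤ s := Finset.sum_nonneg fun j _ => hlam_nonneg j
      have ht0 : 0 ≤ t := Finset.sum_nonneg fun i _ => hlam_nonneg i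
      have hsum : ∑ i, (ν i)^2 = ∑ i ∈ Sᶜ, (lam i)^2 := by
        rw [← Finset.sum_add_sum_compl S]
        have h1 : ∑ i ∈ S, (ν i)^2 = 0 := by
          apply Finset.sum_eq_zero; intro i hi; simp [hν, hi]
        rw [h1, zero_add]
        apply Finset.sum_congr rfl
        intro i hi
        rw [Finset.mem_compl] at hi
        simp [hν, hi]
      -- each lam i ≤ s / k for i ∉ S
      have hbound : ∀ i ∈ Sᶜ, lam i ≤ s / k := by
        intro i hi
        rw [Finset.mem_compl] at hi
        have : (k : ℝ) * lam i ≤ s := by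
          have : ∑ _j ∈ S, lam i ≤ s := Finset.sum_le_sum (fun j hj => horder i hi j hj)
          simpa [hcardS] using this
        rw [le_div_iff₀ (show (0:ℝ) < k by positivity)]
        calc lam i * k = (k:ℝ) * lam i := by ring
          _ ≤ s := this
      have hkey : ∑ i ∈ Sᶜ, (lam i)^2 ≤ s * t / k := by
        calc ∑ i ∈ Sᶜ, (lam i)^2 ≤ ∑ i ∈ Sᶜ, (s / k) * lam i := by
              apply Finset.sum_le_sum
              intro i hi
              rw [sq]
              exact mul_le_mul_of_nonneg_right (hbound i hi) (hlam_nonneg i)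
          _ = s * t / k := by rw [← Finset.mul_sum, ← ht]; ring
      have hfin : ∑ i ∈ Sᶜ, (lam i)^2 ≤ (A.trace / (2 * Real.sqrt k))^2 := by
        have hk0 : (0:ℝ) < k := by positivity
        have hsq : (Real.sqrt k)^2 = k := Real.sq_sqrt (by positivity)
        have h4 : s * t / k ≤ (s + t)^2 / (4 * k) := by
          rw [div_le_div_iff₀ hk0 (by positivity)]
          nlinarith [sq_nonneg (s - t)]
        calc ∑ i ∈ Sᶜ, (lam i)^2 ≤ s * t / k := hkey
          _ ≤ (s + t)^2 / (4 * k) := h4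
          _ = (A.trace / (2 * Real.sqrt k))^2 := by
              rw [hst, div_pow, mul_pow, hsq]; norm_num
      rw [hsum]
      calc Real.sqrt (∑ i ∈ Sᶜ, (lam i)^2) ≤ Real.sqrt ((A.trace / (2 * Real.sqrt k))^2) :=
            Real.sqrt_le_sqrt hfin
        _ = A.trace / (2 * Real.sqrt k) := Real.sqrt_sq (by positivity)
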